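/- Let A ∈ ℝ^{m×n}, b ∈ ℝ^m, and σ̃_{n+1} the smallest singular value of [A, b]; assume σ̃_{n+1} < σ_n, the smallest singular value of A. With B = σ̃_{n+1} I_n, d = 0, Ã = [A; B], b̃ = [b; d], and J̃ = diag(I_m, −I_n), the matrix M̃ = ÃᵀJ̃Ã = AᵀA − σ̃²_{n+1} I_n is symmetric positive definite, and the unique solution of the indefinite least squares problem min_x (b̃ − Ãx)ᵀ J̃ (b̃ − Ãx) is x = (AᵀA − σ̃²_{n+1} I_n)⁻¹ Aᵀ b. -/

import Mathlib

open Matrix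

/-- The Euclidean norm of a vector. -/
noncomputable def euclNorm {ι : Type*} [Fintype ι] (v : ι → ℝ) : ℝ :=
  Real.sqrt (∑ i, v i ^ 2)

/-- The smallest singular value of a matrix:
`σ_min(C) = min_{‖v‖₂ = 1} ‖Cv‖₂`. -/
noncomputable def smin {p q : Type*} [Fintype p] [Fintype q]
    (C : Matrix p q ℝ) : ℝ :=
  ⨅ v : {v : q → ℝ // euclNorm v = 1}, euclNorm (C.mulVec v.1)

lemma euclNorm_nonneg {ι : Type*} [Fintype ι] (v : ι → ℝ) : 0 ≤ euclNorm v :=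
  Real.sqrt_nonneg _

lemma euclNorm_sq {ι : Type*} [Fintype ι] (v : ι → ℝ) : euclNorm v ^ 2 = v ⬝ᵥ v := by
  rw [euclNorm, Real.sq_sqrt (Finset.sum_nonneg fun i _ => sq_nonneg _)]
  simp [dotProduct, pow_two]

lemma euclNorm_eq_zero_iff {ι : Type*} [Fintype ι] (v : ι → ℝ) : euclNorm v = 0 ↔ v = 0 := by
  rw [euclNorm, Real.sqrt_eq_zero (Finset.sum_nonneg fun i _ => sq_nonneg _)]
  constructor
  · intro h
    funext i
    have := (Finset.sum_eq_zero_iff_of_nonneg (fun i _ => sq_nonneg (v i))).1 h i (by simp)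
    exact pow_eq_zero_iff (n := 2) (by norm_num) |>.1 this
  · rintro rfl; simp

lemma euclNorm_smul {ι : Type*} [Fintype ι] (c : ℝ) (v : ι → ℝ) :
    euclNorm (c • v) = |c| * euclNorm v := by
  rw [euclNorm, euclNorm]
  have : ∑ i, (c • v) i ^ 2 = c ^ 2 * ∑ i, v i ^ 2 := by
    rw [Finset.mul_sum]; congr 1; funext i; simp [mul_pow]
  rw [this, Real.sqrt_mul (sq_nonneg _), Real.sqrt_sq_eq_abs]

lemma smin_nonneg {p q : Type*} [Fintype p] [Fintype q] (C : Matrix p q ℝ) :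
    0 ≤ smin C :=
  Real.iInf_nonneg fun _ => Real.sqrt_nonneg _

lemma smin_le {p q : Type*} [Fintype p] [Fintype q] (C : Matrix p q ℝ)
    (v : q → ℝ) (hv : euclNorm v = 1) : smin C ≤ euclNorm (C.mulVec v) := by
  exact ciInf_le ⟨0, by rintro _ ⟨w, rfl⟩; exact Real.sqrt_nonneg _⟩
    (⟨v, hv⟩ : {v : q → ℝ // euclNorm v = 1})

lemma smin_mul_le {p q : Type*} [Fintype p] [Fintype q] (C : Matrix p q ℝ)
    (v : q → ℝ) (hv : v ≠ 0) : smin C * euclNorm v ≤ euclNorm (C.mulVec v) := by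
  have hnv : euclNorm v ≠ 0 := fun h => hv ((euclNorm_eq_zero_iff v).1 h)
  have hpos : 0 < euclNorm v := lt_of_le_of_ne (euclNorm_nonneg v) (Ne.symm hnv)
  have hu : euclNorm ((euclNorm v)⁻¹ • v) = 1 := by
    rw [euclNorm_smul, abs_of_pos (inv_pos.2 hpos), inv_mul_cancel₀ hnv]
  have := smin_le C _ hu
  rw [Matrix.mulVec_smul, euclNorm_smul, abs_of_pos (inv_pos.2 hpos)] at this
  calc smin C * euclNorm v ≤ ((euclNorm v)⁻¹ * euclNorm (C.mulVec v)) * euclNorm v := by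
        exact mul_le_mul_of_nonneg_right this (le_of_lt hpos)
    _ = euclNorm (C.mulVec v) := by field_simp

theorem tls_as_special_ils {m n : ℕ}
    (A : Matrix (Fin m) (Fin n) ℝ) (b : Fin m → ℝ)
    (σtil : ℝ)
    (hσtil : σtil = smin (Matrix.fromCols A (Matrix.of fun i (_ : Fin 1) => b i)))
    (hlt : σtil < smin A)
    (B : Matrix (Fin n) (Fin n) ℝ) (hB : B = σtil • (1 : Matrix (Fin n) (Fin n) ℝ))
    (Atil : Matrix (Fin m ⊕ Fin n) (Fin n) ℝ) (hAtil : Atil = Matrix.fromRows A B)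
    (btil : Fin m ⊕ Fin n → ℝ) (hbtil : btil = Sum.elim b 0)
    (Jtil : Matrix (Fin m ⊕ Fin n) (Fin m ⊕ Fin n) ℝ)
    (hJtil : Jtil = Matrix.fromBlocks 1 0 0 (-1))
    (f : (Fin n → ℝ) → ℝ)
    (hf : ∀ z, f z = (btil - Atil.mulVec z) ⬝ᵥ Jtil.mulVec (btil - Atil.mulVec z))
    (x : Fin n → ℝ)
    (hx : x = (Aᵀ * A - σtil ^ 2 • (1 : Matrix (Fin n) (Fin n) ℝ))⁻¹.mulVec
        (Aᵀ.mulVec b)) :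
    Atilᵀ * Jtil * Atil = Aᵀ * A - σtil ^ 2 • (1 : Matrix (Fin n) (Fin n) ℝ) ∧
    (Aᵀ * A - σtil ^ 2 • (1 : Matrix (Fin n) (Fin n) ℝ)).PosDef ∧
    ∀ y, y ≠ x → f x < f y := by
  set M : Matrix (Fin n) (Fin n) ℝ := Aᵀ * A - σtil ^ 2 • (1 : Matrix (Fin n) (Fin n) ℝ)
    with hM
  have hσ0 : 0 ≤ σtil := hσtil ▸ smin_nonneg _
  -- Step A : the matrix identity
  have stepA : Atilᵀ * Jtil * Atil = M := by
    rw [hAtil, hJtil, Matrix.transpose_fromRows, Matrix.mul_assoc,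
      Matrix.fromBlocks_mul_fromRows, Matrix.fromCols_mul_fromRows]
    rw [hB]
    simp [Matrix.transpose_smul, Matrix.smul_mul, Matrix.mul_smul, smul_smul, hM,
      sub_eq_add_neg, pow_two]
  -- quadratic form of M
  have hquad : ∀ v : Fin n → ℝ, v ⬝ᵥ M.mulVec v
      = euclNorm (A.mulVec v) ^ 2 - σtil ^ 2 * euclNorm v ^ 2 := by
    intro v
    rw [hM, Matrix.sub_mulVec, dotProduct_sub, Matrix.smul_mulVec,
      Matrix.one_mulVec, dotProduct_smul, ← Matrix.mulVec_mulVec,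
      Matrix.dotProduct_mulVec, Matrix.vecMul_transpose, euclNorm_sq, euclNorm_sq]
    simp [smul_eq_mul]
  -- Step B : positive definiteness
  have hposdef : M.PosDef := by
    refine Matrix.posDef_iff_dotProduct_mulVec.mpr ⟨?_, ?_⟩
    · rw [Matrix.IsHermitian, hM]
      simp [Matrix.transpose_sub, Matrix.transpose_mul, Matrix.transpose_smul,
        Matrix.conjTranspose_eq_transpose_of_trivial]
    · intro v hv
      rw [star_trivial, hquad v]
      have h1 : smin A * euclNorm v ≤ euclNorm (A.mulVec v) := smin_mul_le A v hv
      have hnv : 0 < euclNorm v := lt_of_le_of_ne (euclNorm_nonneg v)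
        (Ne.symm fun h => hv ((euclNorm_eq_zero_iff v).1 h))
      have h2 : σtil * euclNorm v < smin A * euclNorm v :=
        mul_lt_mul_of_pos_right hlt hnv
      nlinarith [euclNorm_nonneg (A.mulVec v), mul_nonneg hσ0 (le_of_lt hnv)]
  refine ⟨stepA, hposdef, ?_⟩
  -- Step C : M x = Aᵀ b
  have hdet : IsUnit M.det := (ne_of_gt hposdef.det_pos).isUnit
  have hMx : M.mulVec x = Aᵀ.mulVec b := by
    rw [hx, Matrix.mulVec_mulVec, Matrix.mul_nonsing_inv _ hdet, Matrix.one_mulVec]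
  set c : Fin n → ℝ := Aᵀ.mulVec b with hc
  -- J is symmetric and fixes btil
  have hJsymm : Jtilᵀ = Jtil := by
    rw [hJtil]; simp [Matrix.fromBlocks_transpose]
  have hJb : Jtil.mulVec btil = btil := by
    rw [hJtil, hbtil, Matrix.fromBlocks_mulVec]
    simp
  -- F1 : (Ãz)ᵀ J (Ãw) = zᵀ M w
  have F1 : ∀ z w : Fin n → ℝ,
      (Atil.mulVec z) ⬝ᵥ Jtil.mulVec (Atil.mulVec w) = z ⬝ᵥ M.mulVec w := by
    intro z w
    calc (Atil.mulVec z) ⬝ᵥ Jtil.mulVec (Atil.mulVec w)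
        = (z ᵥ* Atilᵀ) ⬝ᵥ (Jtil * Atil).mulVec w := by
          rw [Matrix.vecMul_transpose, Matrix.mulVec_mulVec]
      _ = z ⬝ᵥ Atilᵀ.mulVec ((Jtil * Atil).mulVec w) :=
          (Matrix.dotProduct_mulVec _ _ _).symm
      _ = z ⬝ᵥ M.mulVec w := by
          rw [Matrix.mulVec_mulVec, ← Matrix.mul_assoc, stepA]
  -- F3 : btil ⬝ (Ãz) = c ⬝ z
  have F3 : ∀ z : Fin n → ℝ, btil ⬝ᵥ (Atil.mulVec z) = c ⬝ᵥ z := by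
    intro z
    rw [hbtil, hAtil, Matrix.fromRows_mulVec, sumElim_dotProduct_sumElim,
      zero_dotProduct, add_zero, hc, Matrix.dotProduct_mulVec, Matrix.mulVec_transpose]
  -- cross terms
  have cross1 : ∀ z : Fin n → ℝ, btil ⬝ᵥ Jtil.mulVec (Atil.mulVec z) = c ⬝ᵥ z := by
    intro z
    have hvb : btil ᵥ* Jtil = btil := by
      conv_lhs => rw [← hJsymm]
      rw [Matrix.vecMul_transpose, hJb]
    rw [Matrix.dotProduct_mulVec, hvb]
    exact F3 z
  have cross2 : ∀ z : Fin n → ℝ, (Atil.mulVec z) ⬝ᵥ Jtil.mulVec btil = c ⬝ᵥ z := by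
    intro z
    rw [hJb, dotProduct_comm]
    exact F3 z
  -- expansion of f
  have hfz : ∀ z : Fin n → ℝ,
      f z = btil ⬝ᵥ Jtil.mulVec btil - 2 * (c ⬝ᵥ z) + z ⬝ᵥ M.mulVec z := by
    intro z
    rw [hf z, Matrix.mulVec_sub, dotProduct_sub, sub_dotProduct, sub_dotProduct,
      cross1, cross2, F1]
    ring
  -- symmetry of M as bilinear form
  have hMsymm : ∀ z w : Fin n → ℝ, z ⬝ᵥ M.mulVec w = w ⬝ᵥ M.mulVec z := by
    intro z w
    have hMt : Mᵀ = M := by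
      rw [← Matrix.conjTranspose_eq_transpose_of_trivial]
      exact hposdef.isHermitian
    have hv : z ᵥ* M = M.mulVec z := by
      conv_lhs => rw [← hMt]
      rw [Matrix.vecMul_transpose]
    rw [Matrix.dotProduct_mulVec, hv, dotProduct_comm]
  intro y hy
  have hkey : f y - f x = (y - x) ⬝ᵥ M.mulVec (y - x) := by
    rw [hfz y, hfz x, Matrix.mulVec_sub, dotProduct_sub, sub_dotProduct, sub_dotProduct]
    have e1 : x ⬝ᵥ M.mulVec x = c ⬝ᵥ x := by rw [hMx, dotProduct_comm]
    have e2 : y ⬝ᵥ M.mulVec x = c ⬝ᵥ y := by rw [hMx, dotProduct_comm]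
    have e3 : x ⬝ᵥ M.mulVec y = c ⬝ᵥ y := by rw [hMsymm, hMx, dotProduct_comm]
    linarith
  have hpos : 0 < (y - x) ⬝ᵥ M.mulVec (y - x) := by
    have := hposdef.dotProduct_mulVec_pos (sub_ne_zero.2 hy)
    rwa [star_trivial] at this
  linarith
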